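/- Up to an exponentially small correction of size exp(−ω₀²/B²), the correlation function 𝒴(s,s') = (1/Δt)∫ ℳ(s,t)ℳ(s',t) dt of the single-target trace ℳ(s,t) = cos(ω₀(t − αs)) exp(−B²(t−αs)²/2) (linearized travel time with slope α) equals (√π/(2BΔt)) cos(ω₀ α(s−s')) exp(−B²α²(s−s')²/4), i.e. it depends only on s − s'. -/
import Mathlib

open MeasureTheory

lemma gauss_cos_integrable_aux (B ω : ℝ) (hB : 0 < B) :
    Integrable (fun u : ℝ => Real.cos (ω * u) * Real.exp (-(B ^ 2) * u ^ 2)) := by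
  have hb : (0:ℝ) < ((B ^ 2 : ℝ) : ℂ).re := by simp only [Complex.ofReal_re]; positivity
  have hg := (integrable_cexp_quadratic hb (Complex.I * ω) 0).re
  simp only [RCLike.re_to_complex] at hg
  have : (fun x : ℝ => (Complex.exp (-(B ^ 2 : ℝ) * x ^ 2 + Complex.I * ω * x + 0)).re)
      = fun u : ℝ => Real.cos (ω * u) * Real.exp (-(B ^ 2) * u ^ 2) := by
    funext x
    rw [Complex.exp_re]
    have hre : (-(B ^ 2 : ℝ) * (x:ℂ) ^ 2 + Complex.I * ω * x + 0).re = -(B ^ 2) * x ^ 2 := by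
      simp [Complex.mul_re, Complex.mul_im, ← Complex.ofReal_pow]
    have him : (-(B ^ 2 : ℝ) * (x:ℂ) ^ 2 + Complex.I * ω * x + 0).im = ω * x := by
      simp [Complex.mul_re, Complex.mul_im, ← Complex.ofReal_pow]
    rw [hre, him]; ring
    -- note: Complex coercions
  rw [this] at hg
  exact hg

lemma gauss_cos_integral_aux (B ω : ℝ) (hB : 0 < B) :
    ∫ u : ℝ, Real.cos (ω * u) * Real.exp (-(B ^ 2) * u ^ 2)
      = Real.sqrt Real.pi / B * Real.exp (-(ω ^ 2) / (4 * B ^ 2)) := by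
  have hb : (0:ℝ) < ((B ^ 2 : ℝ) : ℂ).re := by simp only [Complex.ofReal_re]; positivity
  have key := fourierIntegral_gaussian hb (ω : ℂ)
  have hfun : (fun x : ℝ => Complex.exp (Complex.I * ω * x) * Complex.exp (-(B ^ 2 : ℝ) * x ^ 2))
      = fun x : ℝ => Complex.exp (-(B ^ 2 : ℝ) * x ^ 2 + Complex.I * ω * x + 0) := by
    funext x; rw [← Complex.exp_add]; ring_nf
  have hint : Integrable (fun x : ℝ =>
      Complex.exp (Complex.I * ω * x) * Complex.exp (-(B ^ 2 : ℝ) * x ^ 2)) := by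
    rw [hfun]; exact integrable_cexp_quadratic hb (Complex.I * ω) 0
  have hre := integral_re (μ := volume) hint
  simp only [RCLike.re_to_complex] at hre
  have hlhs : (fun x : ℝ =>
      Complex.re (Complex.exp (Complex.I * ω * x) * Complex.exp (-(B ^ 2 : ℝ) * x ^ 2)))
      = fun u : ℝ => Real.cos (ω * u) * Real.exp (-(B ^ 2) * u ^ 2) := by
    funext x
    rw [← Complex.exp_add, Complex.exp_re]
    have hre' : (Complex.I * ω * x + -(B ^ 2 : ℝ) * (x:ℂ) ^ 2).re = -(B ^ 2) * x ^ 2 := by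
      simp [Complex.mul_re, Complex.mul_im, ← Complex.ofReal_pow]
    have him' : (Complex.I * ω * x + -(B ^ 2 : ℝ) * (x:ℂ) ^ 2).im = ω * x := by
      simp [Complex.mul_re, Complex.mul_im, ← Complex.ofReal_pow]
    rw [hre', him']; ring
  rw [hlhs] at hre
  rw [hre, key]
  -- now compute the real part of the RHS
  have hB2 : (0:ℝ) ≤ Real.pi / B ^ 2 := by positivity
  have h1 : ((Real.pi : ℂ) / (B ^ 2 : ℝ)) ^ (1/2 : ℂ)
      = ((Real.pi / B ^ 2) ^ (1/2 : ℝ) : ℝ) := by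
    rw [show ((Real.pi:ℂ) / ((B ^ 2 : ℝ):ℂ)) = ((Real.pi / B ^ 2 : ℝ) : ℂ) by push_cast; ring,
      show (1/2 : ℂ) = ((1/2 : ℝ) : ℂ) by norm_num, ← Complex.ofReal_cpow hB2]
  have h2 : (-(ω:ℂ) ^ 2 / (4 * (B ^ 2 : ℝ))) = ((-(ω ^ 2) / (4 * B ^ 2) : ℝ) : ℂ) := by
    push_cast; ring
  rw [h1, h2, ← Complex.ofReal_exp, ← Complex.ofReal_mul, Complex.ofReal_re]
  congr 1
  rw [← Real.sqrt_eq_rpow, Real.sqrt_div Real.pi_nonneg, Real.sqrt_sq hB.le]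

/-- Up to an exponentially small correction of size `exp(−ω₀²/B²)`, the correlation
function `𝒴(s,s') = (1/Δt)∫ ℳ(s,t)ℳ(s',t) dt` of the single-target trace
`ℳ(s,t) = cos(ω₀(t − αs)) exp(−B²(t−αs)²/2)` equals
`(√π/(2BΔt)) cos(ω₀α(s−s')) exp(−B²α²(s−s')²/4)`. -/
theorem single_target_correlation_approx_toeplitz (B Δt ω₀ α : ℝ)
    (hB : 0 < B) (hΔt : 0 < Δt) (s s' : ℝ) :
    let M : ℝ → ℝ → ℝ := fun σ t =>
      Real.cos (ω₀ * (t - α * σ)) * Real.exp (-(B ^ 2 * (t - α * σ) ^ 2) / 2)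
    |(1 / Δt) * (∫ t : ℝ, M s t * M s' t) -
        Real.sqrt Real.pi / (2 * B * Δt) * (Real.cos (ω₀ * α * (s - s')) *
          Real.exp (-(B ^ 2 * α ^ 2 * (s - s') ^ 2) / 4))| ≤
      Real.sqrt Real.pi / (2 * B * Δt) * Real.exp (-(ω₀ ^ 2 / B ^ 2)) := by
  intro M
  set d : ℝ := α * (s - s') with hd
  set m : ℝ := (α * s + α * s') / 2 with hm
  have hshift : (∫ t : ℝ, M s t * M s' t) = ∫ u : ℝ, M s (u + m) * M s' (u + m) :=
    (integral_add_right_eq_self (fun t => M s t * M s' t) m).symm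
  have hpt : ∀ u : ℝ, M s (u + m) * M s' (u + m)
      = (Real.cos (ω₀ * d) * Real.exp (-(B ^ 2 * d ^ 2) / 4) / 2) * Real.exp (-(B ^ 2) * u ^ 2)
        + (Real.exp (-(B ^ 2 * d ^ 2) / 4) / 2)
          * (Real.cos (2 * ω₀ * u) * Real.exp (-(B ^ 2) * u ^ 2)) := by
    intro u
    have e1 : u + m - α * s = u - d / 2 := by rw [hd, hm]; ring
    have e2 : u + m - α * s' = u + d / 2 := by rw [hd, hm]; ring
    show (Real.cos (ω₀ * (u + m - α * s)) * Real.exp (-(B ^ 2 * (u + m - α * s) ^ 2) / 2))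
        * (Real.cos (ω₀ * (u + m - α * s')) * Real.exp (-(B ^ 2 * (u + m - α * s') ^ 2) / 2)) = _
    rw [e1, e2]
    have hcos : Real.cos (ω₀ * (u - d / 2)) * Real.cos (ω₀ * (u + d / 2))
        = (Real.cos (ω₀ * d) + Real.cos (2 * ω₀ * u)) / 2 := by
      have h := Real.two_mul_cos_mul_cos (ω₀ * (u - d / 2)) (ω₀ * (u + d / 2))
      have ha : ω₀ * (u - d / 2) - ω₀ * (u + d / 2) = -(ω₀ * d) := by ring
      have hb' : ω₀ * (u - d / 2) + ω₀ * (u + d / 2) = 2 * ω₀ * u := by ring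
      rw [ha, hb', Real.cos_neg] at h
      linarith
    have hexp : Real.exp (-(B ^ 2 * (u - d / 2) ^ 2) / 2) * Real.exp (-(B ^ 2 * (u + d / 2) ^ 2) / 2)
        = Real.exp (-(B ^ 2) * u ^ 2) * Real.exp (-(B ^ 2 * d ^ 2) / 4) := by
      rw [← Real.exp_add, ← Real.exp_add]; congr 1; ring
    calc Real.cos (ω₀ * (u - d / 2)) * Real.exp (-(B ^ 2 * (u - d / 2) ^ 2) / 2)
          * (Real.cos (ω₀ * (u + d / 2)) * Real.exp (-(B ^ 2 * (u + d / 2) ^ 2) / 2))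
        = (Real.cos (ω₀ * (u - d / 2)) * Real.cos (ω₀ * (u + d / 2)))
          * (Real.exp (-(B ^ 2 * (u - d / 2) ^ 2) / 2)
            * Real.exp (-(B ^ 2 * (u + d / 2) ^ 2) / 2)) := by ring
      _ = ((Real.cos (ω₀ * d) + Real.cos (2 * ω₀ * u)) / 2)
          * (Real.exp (-(B ^ 2) * u ^ 2) * Real.exp (-(B ^ 2 * d ^ 2) / 4)) := by rw [hcos, hexp]
      _ = _ := by ring
  have i1 : Integrable (fun u : ℝ => Real.exp (-(B ^ 2) * u ^ 2)) := by
    simpa using gauss_cos_integrable_aux B 0 hB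
  have i2 := gauss_cos_integrable_aux B (2 * ω₀) hB
  have v1 : (∫ u : ℝ, Real.exp (-(B ^ 2) * u ^ 2)) = Real.sqrt Real.pi / B := by
    have h := gauss_cos_integral_aux B 0 hB
    simpa using h
  have v2 : (∫ u : ℝ, Real.cos (2 * ω₀ * u) * Real.exp (-(B ^ 2) * u ^ 2))
      = Real.sqrt Real.pi / B * Real.exp (-(ω₀ ^ 2 / B ^ 2)) := by
    have h := gauss_cos_integral_aux B (2 * ω₀) hB
    rw [h]
    congr 1
    congr 1
    field_simp
    ring
  have hI : (∫ t : ℝ, M s t * M s' t)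
      = (Real.cos (ω₀ * d) * Real.exp (-(B ^ 2 * d ^ 2) / 4) / 2) * (Real.sqrt Real.pi / B)
        + (Real.exp (-(B ^ 2 * d ^ 2) / 4) / 2)
          * (Real.sqrt Real.pi / B * Real.exp (-(ω₀ ^ 2 / B ^ 2))) := by
    rw [hshift]
    simp_rw [hpt]
    rw [integral_add (i1.const_mul _) (i2.const_mul _), integral_const_mul, integral_const_mul,
      v1, v2]
  have harg1 : ω₀ * α * (s - s') = ω₀ * d := by rw [hd]; ring
  have harg2 : B ^ 2 * α ^ 2 * (s - s') ^ 2 = B ^ 2 * d ^ 2 := by rw [hd]; ring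
  rw [hI, harg1, harg2]
  have hval : (1 / Δt) * ((Real.cos (ω₀ * d) * Real.exp (-(B ^ 2 * d ^ 2) / 4) / 2)
        * (Real.sqrt Real.pi / B)
        + (Real.exp (-(B ^ 2 * d ^ 2) / 4) / 2)
          * (Real.sqrt Real.pi / B * Real.exp (-(ω₀ ^ 2 / B ^ 2))))
      - Real.sqrt Real.pi / (2 * B * Δt) * (Real.cos (ω₀ * d) * Real.exp (-(B ^ 2 * d ^ 2) / 4))
      = Real.sqrt Real.pi / (2 * B * Δt)
        * (Real.exp (-(B ^ 2 * d ^ 2) / 4) * Real.exp (-(ω₀ ^ 2 / B ^ 2))) := by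
    field_simp
    ring
  rw [hval, abs_of_nonneg (by positivity)]
  have hle : Real.exp (-(B ^ 2 * d ^ 2) / 4) ≤ 1 := by
    rw [Real.exp_le_one_iff]
    nlinarith [sq_nonneg (B * d)]
  have hc : (0:ℝ) ≤ Real.sqrt Real.pi / (2 * B * Δt) := by positivity
  have hE : (0:ℝ) < Real.exp (-(ω₀ ^ 2 / B ^ 2)) := Real.exp_pos _
  exact mul_le_mul_of_nonneg_left (mul_le_of_le_one_left hE.le hle) hc
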